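/- Let L be a negative definite lattice with basis {E_j}, L' its dual in L⊗Q, and NE_Q the cone {x : (x,E_j) ≥ 0 ∀j}. For every class h ∈ L'/L, the intersection (l' + L) ∩ NE_Q (for any representative l' of h) has a unique maximal element l'_{ne}(h) with respect to the coordinatewise order, and the intersection (l' + L) ∩ (−NE_Q) has a unique minimal element \bar{l}'_{ne}(h); moreover \bar{l}'_{ne}(h) = −l'_{ne}(−h). -/
import Mathlib


open Matrix

variable {J : Type*}

/-- The rational bilinear (intersection) form associated with the integral matrix `B`. -/
def bform [Fintype J] (B : Matrix J J ℤ) (x y : J → ℚ) : ℚ :=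
  x ⬝ᵥ (B.map (fun n => (n : ℚ))).mulVec y

/-- `B` is negative definite as a rational quadratic form. -/
def NegDef [Fintype J] (B : Matrix J J ℤ) : Prop :=
  ∀ x : J → ℚ, x ≠ 0 → bform B x x < 0

/-- Membership in the lattice `L` (integral coordinates in the basis `E_j`). -/
def isLat (x : J → ℚ) : Prop := ∀ j, ∃ m : ℤ, x j = (m : ℚ)

/-- Membership in the dual lattice `L' ⊂ L ⊗ ℚ`. -/
def isDual [Fintype J] [DecidableEq J] (B : Matrix J J ℤ) (x : J → ℚ) : Prop :=
  ∀ j, ∃ m : ℤ, bform B x (Pi.single j 1) = (m : ℚ)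

/-- Membership in the anti-nef cone `NE_ℚ = {x : (x,E_j) ≥ 0 ∀ j}`. -/
def inNE [Fintype J] [DecidableEq J] (B : Matrix J J ℤ) (x : J → ℚ) : Prop :=
  ∀ j, 0 ≤ bform B x (Pi.single j 1)

/-- Effective rational cycles: all coordinates nonnegative. -/
def Effective (x : J → ℚ) : Prop := ∀ j, 0 ≤ x j

/-- `χ(x) = -(x, x+K)/2` (Riemann–Roch). -/
def chi [Fintype J] (B : Matrix J J ℤ) (K x : J → ℚ) : ℚ := -(bform B x (x + K)) / 2

section Aux

variable [Fintype J] [DecidableEq J]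

lemma bform_single_sum (B : Matrix J J ℤ) (x : J → ℚ) (j : J) :
    bform B x (Pi.single j 1) = ∑ i, x i * (B i j : ℚ) := by
  simp [bform, Matrix.mulVec, dotProduct, Pi.single_apply, mul_ite]

lemma bform_single_mulVec (B : Matrix J J ℤ) (hsym : B.IsSymm) (x : J → ℚ) (j : J) :
    bform B x (Pi.single j 1) = (B.map (fun n => (n : ℚ))).mulVec x j := by
  rw [bform_single_sum]
  simp only [Matrix.mulVec, dotProduct, Matrix.map_apply]
  refine Finset.sum_congr rfl fun i _ => ?_
  rw [mul_comm, hsym.apply j i]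

lemma bform_eq_dot (B : Matrix J J ℤ) (x y : J → ℚ) :
    bform B x y = x ⬝ᵥ (B.map (fun n => (n : ℚ))).mulVec y := rfl

lemma isLat_neg {a : J → ℚ} (ha : isLat a) : isLat (-a) := by
  intro j; obtain ⟨m, hm⟩ := ha j
  exact ⟨-m, by simp [hm]⟩

lemma isLat_max {a b : J → ℚ} (ha : isLat a) (hb : isLat b) :
    isLat (fun j => max (a j) (b j)) := by
  intro j; obtain ⟨m, hm⟩ := ha j; obtain ⟨n, hn⟩ := hb j
  exact ⟨max m n, by simp [hm, hn, Int.cast_max]⟩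

lemma isLat_sum {a : J → ℚ} (ha : isLat a) : ∃ m : ℤ, ∑ j, a j = (m : ℚ) := by
  choose m hm using ha
  exact ⟨∑ j, m j, by push_cast; exact Finset.sum_congr rfl fun j _ => hm j⟩

/-- If `x ≡ l'` mod `L` and `l'` is dual, the pairings of `x` with basis vectors are integers. -/
lemma dual_pair_int (B : Matrix J J ℤ) {l' x : J → ℚ} (hl' : isDual B l')
    (hx : isLat (x - l')) (j : J) : ∃ m : ℤ, bform B x (Pi.single j 1) = (m : ℚ) := by
  obtain ⟨m, hm⟩ := hl' j
  choose c hc using hx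
  refine ⟨m + ∑ i, c i * B i j, ?_⟩
  have h1 : bform B x (Pi.single j 1)
      = bform B l' (Pi.single j 1) + bform B (x - l') (Pi.single j 1) := by
    simp [bform, sub_dotProduct, add_dotProduct]
  rw [h1, hm, bform_single_sum]
  push_cast
  rw [add_right_inj]
  exact Finset.sum_congr rfl fun i _ => by rw [hc i]

/-- Anti-nef vectors are coordinatewise nonpositive. -/
lemma inNE_nonpos (B : Matrix J J ℤ) (hsym : B.IsSymm) (hneg : NegDef B)
    (hoff : ∀ i j, i ≠ j → 0 ≤ B i j) {x : J → ℚ} (hx : inNE B x) :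
    ∀ j, x j ≤ 0 := by
  set p : J → ℚ := fun j => max (x j) 0 with hp
  have hp0 : ∀ j, 0 ≤ p j := fun j => le_max_right _ _
  have hpx : ∀ j, 0 ≤ p j - x j := fun j => by simp [hp, le_max_left]
  have hmul : ∀ j, p j * (p j - x j) = 0 := by
    intro j
    rcases le_total (x j) 0 with h | h
    · simp [hp, max_eq_right h]
    · simp [hp, max_eq_left h]
  have key : p = 0 := by
    by_contra hne
    have hlt := hneg p hne
    have h1 : 0 ≤ bform B p x := by
      rw [bform_eq_dot]
      refine Finset.sum_nonneg fun j _ => mul_nonneg (hp0 j) ?_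
      have := hx j
      rwa [bform_single_mulVec B hsym] at this
    have h2 : 0 ≤ bform B p (p - x) := by
      rw [bform_eq_dot]
      refine Finset.sum_nonneg fun i _ => ?_
      rw [Matrix.mulVec, dotProduct, Finset.mul_sum]
      refine Finset.sum_nonneg fun j _ => ?_
      rcases eq_or_ne i j with rfl | hij
      · have e : p i * ((B.map fun n => (n:ℚ)) i i * (p - x) i)
            = (B i i : ℚ) * (p i * (p i - x i)) := by
          simp only [Matrix.map_apply, Pi.sub_apply]; ring
        rw [e, hmul i, mul_zero]
      · have hB : (0:ℚ) ≤ (B i j : ℚ) := by exact_mod_cast hoff i j hij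
        have : (0:ℚ) ≤ (p - x) j := hpx j
        exact mul_nonneg (hp0 i) (mul_nonneg (by simpa [Matrix.map_apply] using hB) this)
    have : 0 ≤ bform B p p := by
      have : bform B p p = bform B p x + bform B p (p - x) := by
        simp only [bform, Matrix.mulVec_sub, dotProduct_sub]
        ring
      rw [this]; exact add_nonneg h1 h2
    linarith
  intro j
  have h0 : p j = 0 := by rw [key]; rfl
  calc x j ≤ p j := le_max_left _ _
    _ = 0 := h0

/-- The anti-nef cone is closed under coordinatewise max. -/
lemma inNE_max (B : Matrix J J ℤ) (hsym : B.IsSymm)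
    (hoff : ∀ i j, i ≠ j → 0 ≤ B i j) {x y : J → ℚ} (hx : inNE B x) (hy : inNE B y) :
    inNE B (fun j => max (x j) (y j)) := by
  set z : J → ℚ := fun j => max (x j) (y j) with hz
  intro j
  have main : ∀ w : J → ℚ, inNE B w → (∀ i, w i ≤ z i) → z j = w j →
      0 ≤ bform B z (Pi.single j 1) := by
    intro w hw hle hj
    rw [bform_single_mulVec B hsym]
    have hdecomp : (B.map (fun n => (n:ℚ))).mulVec z j
        = (B.map (fun n => (n:ℚ))).mulVec w j
          + ∑ i, (B.map (fun n => (n:ℚ))) j i * (z i - w i) := by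
      rw [Matrix.mulVec, Matrix.mulVec, dotProduct, dotProduct, ← Finset.sum_add_distrib]
      exact Finset.sum_congr rfl fun i _ => by ring
    have h1 : 0 ≤ (B.map (fun n => (n:ℚ))).mulVec w j := by
      rw [← bform_single_mulVec B hsym]; exact hw j
    have h2 : 0 ≤ ∑ i, (B.map (fun n => (n:ℚ))) j i * (z i - w i) := by
      refine Finset.sum_nonneg fun i _ => ?_
      rcases eq_or_ne i j with rfl | hij
      · rw [hj, sub_self, mul_zero]
      · refine mul_nonneg ?_ (sub_nonneg.mpr (hle i))
        simpa [Matrix.map_apply] using (by exact_mod_cast hoff j i (Ne.symm hij) : (0:ℚ) ≤ (B j i : ℚ))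
    rw [hdecomp]
    linarith
  rcases le_total (x j) (y j) with h | h
  · exact main y hy (fun i => le_max_right _ _) (max_eq_right h)
  · exact main x hx (fun i => le_max_left _ _) (max_eq_left h)

/-- Existence of a maximal representative of a class in the anti-nef cone. -/
lemma exists_max (B : Matrix J J ℤ) (hsym : B.IsSymm) (hneg : NegDef B)
    (hoff : ∀ i j, i ≠ j → 0 ≤ B i j) (l' : J → ℚ) (hl' : isDual B l') :
    ∃ x : J → ℚ, (isLat (x - l') ∧ inNE B x) ∧
      ∀ y : J → ℚ, isLat (y - l') → inNE B y → y ≤ x := by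
  classical
  set A : Matrix J J ℚ := B.map (fun n => (n : ℚ)) with hA
  -- A is invertible, get w with A.mulVec w = 1
  have hinj : Function.Injective A.mulVecLin := by
    rw [← LinearMap.ker_eq_bot, LinearMap.ker_eq_bot']
    intro v hv
    by_contra hvne
    have h0 : bform B v v = 0 := by
      rw [bform_eq_dot, ← hA, show A.mulVec v = 0 from hv, dotProduct_zero]
    exact absurd h0 (ne_of_lt (hneg v hvne))
  have hsurj := (LinearMap.injective_iff_surjective (f := A.mulVecLin)).mp hinj
  obtain ⟨w, hw⟩ := hsurj (fun _ => 1)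
  have hwv : A.mulVec w = fun _ => 1 := hw
  -- clear denominators
  set N : ℕ := ∏ j, (w j).den with hN
  have hNpos : 0 < N := Finset.prod_pos fun j _ => (w j).pos
  have hu_int : ∀ j, ∃ m : ℤ, (N : ℚ) * w j = (m : ℚ) := by
    intro j
    have hdvd : (w j).den ∣ N := Finset.dvd_prod_of_mem _ (Finset.mem_univ j)
    obtain ⟨c, hc⟩ := hdvd
    refine ⟨(c : ℤ) * (w j).num, ?_⟩
    have hden : ((w j).den : ℚ) * w j = ((w j).num : ℚ) := by
      rw [mul_comm]; exact_mod_cast Rat.mul_den_eq_num (w j)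
    push_cast
    rw [hc]
    push_cast
    rw [mul_comm ((w j).den : ℚ) (c : ℚ), mul_assoc, hden]
  set u : J → ℚ := fun j => (N : ℚ) * w j with hu
  have hAu : ∀ j, A.mulVec u j = (N : ℚ) := by
    intro j
    have : u = (N : ℚ) • w := by funext i; simp [hu]
    rw [this, Matrix.mulVec_smul, hwv]
    simp
  -- choose k
  have hk : ∀ j, ∃ k : ℕ, 0 ≤ A.mulVec l' j + (k : ℚ) * N := by
    intro j
    obtain ⟨k, hk⟩ := exists_nat_ge (-(A.mulVec l' j) / N)
    refine ⟨k, ?_⟩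
    have hNQ : (0:ℚ) < N := by exact_mod_cast hNpos
    rw [div_le_iff₀ hNQ] at hk
    linarith
  choose kf hkf using hk
  set k : ℕ := Finset.univ.sup kf with hkdef
  have hkb : ∀ j, 0 ≤ A.mulVec l' j + (k : ℚ) * N := by
    intro j
    have hle : kf j ≤ k := Finset.le_sup (Finset.mem_univ j)
    have : (kf j : ℚ) * N ≤ (k : ℚ) * N := by
      have hNQ : (0:ℚ) ≤ N := by positivity
      exact mul_le_mul_of_nonneg_right (by exact_mod_cast hle) hNQ
    linarith [hkf j]
  -- x₀ = l' + k • u is in the class and anti-nef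
  set x₀ : J → ℚ := l' + (k : ℚ) • u with hx₀
  have hx₀lat : isLat (x₀ - l') := by
    intro j
    obtain ⟨m, hm⟩ := hu_int j
    refine ⟨(k : ℤ) * m, ?_⟩
    simp only [hx₀, Pi.add_apply, Pi.smul_apply, smul_eq_mul, Pi.sub_apply, hu]
    push_cast
    rw [hm]
    ring
  have hx₀ne : inNE B x₀ := by
    intro j
    rw [bform_single_mulVec B hsym, ← hA]
    have : A.mulVec x₀ j = A.mulVec l' j + (k:ℚ) * A.mulVec u j := by
      simp [hx₀, Matrix.mulVec_add, Matrix.mulVec_smul]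
    rw [this, hAu j]
    exact hkb j
  -- maximize the coordinate sum
  set P : ℤ → Prop := fun m => ∃ x : J → ℚ, (isLat (x - l') ∧ inNE B x) ∧
      (∑ j, (x j - l' j)) = (m : ℚ) with hP
  have hbdd : ∃ b : ℤ, ∀ m, P m → m ≤ b := by
    obtain ⟨b, hb⟩ := exists_int_gt (∑ j, (-(l' j)))
    refine ⟨b, fun m hm => ?_⟩
    obtain ⟨x, ⟨hlat, hne⟩, hsum⟩ := hm
    have hxle := inNE_nonpos B hsym hneg hoff hne
    have : (m : ℚ) ≤ ∑ j, (-(l' j)) := by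
      rw [← hsum]
      exact Finset.sum_le_sum fun j _ => by linarith [hxle j]
    exact_mod_cast this.trans hb.le
  have hinh : ∃ m, P m := by
    obtain ⟨m, hm⟩ := isLat_sum (a := x₀ - l') hx₀lat
    exact ⟨m, x₀, ⟨hx₀lat, hx₀ne⟩, by rw [← hm]; exact Finset.sum_congr rfl fun j _ => rfl⟩
  obtain ⟨m', hm', hgreatest⟩ := Int.exists_greatest_of_bdd hbdd hinh
  obtain ⟨xm, ⟨hxmlat, hxmne⟩, hxmsum⟩ := hm'
  refine ⟨xm, ⟨hxmlat, hxmne⟩, ?_⟩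
  intro y hylat hyne
  set z : J → ℚ := fun j => max (xm j) (y j) with hzdef
  have hzlat : isLat (z - l') := by
    have := isLat_max hxmlat hylat
    intro j
    obtain ⟨m, hm⟩ := this j
    refine ⟨m, ?_⟩
    simp only [Pi.sub_apply] at hm ⊢
    rw [← hm, hzdef]
    simp [max_sub_sub_right]
  have hzne : inNE B z := inNE_max B hsym hoff hxmne hyne
  obtain ⟨mz, hmz⟩ := isLat_sum (a := z - l') hzlat
  have hmzsum : ∑ j, (z j - l' j) = (mz : ℚ) := by
    rw [← hmz]; exact Finset.sum_congr rfl fun j _ => rfl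
  have hPmz : P mz := ⟨z, ⟨hzlat, hzne⟩, hmzsum⟩
  have hle1 : mz ≤ m' := hgreatest mz hPmz
  have hle2 : (m' : ℚ) ≤ (mz : ℚ) := by
    rw [← hxmsum, ← hmzsum]
    exact Finset.sum_le_sum fun j _ => by
      have : xm j ≤ z j := le_max_left _ _
      linarith
  have heq : (mz : ℚ) = (m' : ℚ) := le_antisymm (by exact_mod_cast hle1) hle2
  have hzero : ∑ j, (z j - xm j) = 0 := by
    have : ∑ j, (z j - xm j) = ∑ j, (z j - l' j) - ∑ j, (xm j - l' j) := by
      rw [← Finset.sum_sub_distrib]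
      exact Finset.sum_congr rfl fun j _ => by ring
    rw [this, hmzsum, hxmsum, heq, sub_self]
  have hall : ∀ j ∈ Finset.univ, z j - xm j = 0 := by
    rw [← Finset.sum_eq_zero_iff_of_nonneg (fun j _ => by
      have : xm j ≤ z j := le_max_left _ _
      linarith)]
    exact hzero
  intro j
  have h1 : y j ≤ z j := le_max_right _ _
  have h2 : z j = xm j := by have := hall j (Finset.mem_univ j); linarith
  linarith

end Aux

/-- each class `h ∈ L'/L` has a unique maximal representative
`l'_{ne}(h)` in `NE_ℚ`, a unique minimal representative `\bar l'_{ne}(h)` in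
`-NE_ℚ`, and `\bar l'_{ne}(h) = - l'_{ne}(-h)`. -/
theorem stmt5 {J : Type*} [Fintype J] [DecidableEq J]
    (B : Matrix J J ℤ)
    (hsym : B.IsSymm)
    (hneg : NegDef B)
    (hoff : ∀ i j, i ≠ j → 0 ≤ B i j)
    (l' : J → ℚ) (hl' : isDual B l') :
    (∃! x : J → ℚ, isLat (x - l') ∧ inNE B x ∧
        ∀ y : J → ℚ, isLat (y - l') → inNE B y → y ≤ x) ∧
    (∃! z : J → ℚ, isLat (z - l') ∧ inNE B (-z) ∧
        ∀ y : J → ℚ, isLat (y - l') → inNE B (-y) → z ≤ y) ∧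
    (∀ x z : J → ℚ,
      -- `x` is the maximal representative of the class of `-l'` in `NE_ℚ`
      (isLat (x + l') ∧ inNE B x ∧
        ∀ y : J → ℚ, isLat (y + l') → inNE B y → y ≤ x) →
      -- `z` is the minimal representative of the class of `l'` in `-NE_ℚ`
      (isLat (z - l') ∧ inNE B (-z) ∧
        ∀ y : J → ℚ, isLat (y - l') → inNE B (-y) → z ≤ y) →
      z = -x) := by
  have hl'neg : isDual B (-l') := by
    intro j
    obtain ⟨m, hm⟩ := hl' j
    refine ⟨-m, ?_⟩
    have : bform B (-l') (Pi.single j 1) = -(bform B l' (Pi.single j 1)) := by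
      simp [bform, neg_dotProduct]
    rw [this, hm]; push_cast; ring
  -- part 1
  obtain ⟨x₁, ⟨hx₁lat, hx₁ne⟩, hx₁max⟩ := exists_max B hsym hneg hoff l' hl'
  have part1 : ∃! x : J → ℚ, isLat (x - l') ∧ inNE B x ∧
      ∀ y : J → ℚ, isLat (y - l') → inNE B y → y ≤ x := by
    refine ⟨x₁, ⟨hx₁lat, hx₁ne, hx₁max⟩, ?_⟩
    rintro x' ⟨h1, h2, h3⟩
    exact le_antisymm (hx₁max x' h1 h2) (h3 x₁ hx₁lat hx₁ne)
  -- part 2: use the class of -l'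
  obtain ⟨x₂, ⟨hx₂lat, hx₂ne⟩, hx₂max⟩ := exists_max B hsym hneg hoff (-l') hl'neg
  have hmem : isLat (-x₂ - l') := by
    have : (-x₂ - l') = -(x₂ - (-l')) := by ring
    rw [this]; exact isLat_neg hx₂lat
  have hmemne : inNE B (-(-x₂)) := by rw [neg_neg]; exact hx₂ne
  have hmin : ∀ y : J → ℚ, isLat (y - l') → inNE B (-y) → -x₂ ≤ y := by
    intro y hy hyne
    have h1 : isLat (-y - (-l')) := by
      have : (-y - (-l')) = -(y - l') := by ring
      rw [this]; exact isLat_neg hy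
    have := hx₂max (-y) h1 hyne
    intro j
    have := this j
    simp only [Pi.neg_apply] at this ⊢
    linarith
  have part2 : ∃! z : J → ℚ, isLat (z - l') ∧ inNE B (-z) ∧
      ∀ y : J → ℚ, isLat (y - l') → inNE B (-y) → z ≤ y := by
    refine ⟨-x₂, ⟨hmem, hmemne, hmin⟩, ?_⟩
    rintro z' ⟨h1, h2, h3⟩
    exact le_antisymm (h3 (-x₂) hmem hmemne) (hmin z' h1 h2)
  refine ⟨part1, part2, ?_⟩
  -- part 3
  rintro x z ⟨hxlat, hxne, hxmax⟩ ⟨hzlat, hzne, hzmin⟩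
  have hnxlat : isLat (-x - l') := by
    have : (-x - l') = -(x + l') := by ring
    rw [this]; exact isLat_neg hxlat
  have hnxne : inNE B (-(-x)) := by rw [neg_neg]; exact hxne
  have h1 : z ≤ -x := hzmin (-x) hnxlat hnxne
  have h2 : -x ≤ z := by
    have hnz : isLat (-z + l') := by
      have : (-z + l') = -(z - l') := by ring
      rw [this]; exact isLat_neg hzlat
    have := hxmax (-z) hnz hzne
    intro j
    have := this j
    simp only [Pi.neg_apply] at this ⊢
    linarith
  exact le_antisymm h1 h2
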